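/- Let P > 0, and let o₁ ≤ o₂ ≤ … ≤ oₙ ≤ P and l₁, …, lₙ ≥ 0 be real numbers. Define f(t) = Σ_{j=1}^{n} lⱼ·⌈(t−oⱼ)/P⌉ and ρ = (Σ_{j=1}^{n} lⱼ)/P, and for each k define σₖ = Σ_{j=1}^{k} lⱼ − ρ·oₖ. Then for all t ≥ 0, f(t) ≤ ρ·t + max{σ₁, …, σₙ}. -/

import Mathlib

/-- Linear bound on a staircase function (Lemma 5): with `P > 0`,
ordered offsets `o₁ ≤ ⋯ ≤ oₙ ≤ P`, nonnegative heights `lⱼ`,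
`f(t) = Σⱼ lⱼ⌈(t−oⱼ)/P⌉`, `ρ = (Σⱼ lⱼ)/P`, `σₖ = Σ_{j≤k} lⱼ − ρ oₖ`,
one has `f(t) ≤ ρ t + max σₖ` for all `t ≥ 0`. -/
theorem staircase_linear_bound (n : ℕ) (hn : 0 < n) (P : ℝ) (hP : 0 < P)
    (o l : Fin n → ℝ) (ho : Monotone o) (hoP : ∀ j, o j ≤ P) (hoNN : ∀ j, 0 ≤ o j)
    (hl : ∀ j, 0 ≤ l j) :
    ∀ t : ℝ, 0 ≤ t →
      (∑ j : Fin n, l j * ⌈(t - o j) / P⌉) ≤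
        ((∑ j : Fin n, l j) / P) * t +
          (Finset.univ.sup' (Finset.univ_nonempty_iff.mpr ⟨⟨0, hn⟩⟩)
            (fun k : Fin n =>
              (∑ j : Fin n, if j ≤ k then l j else 0) - ((∑ j : Fin n, l j) / P) * o k)) := by
  intro t ht
  set L := ∑ j : Fin n, l j with hLdef
  have hL : 0 ≤ L := Finset.sum_nonneg fun j _ => hl j
  set ρ := L / P with hρdef
  have hρ : 0 ≤ ρ := div_nonneg hL hP.le
  have hρP : ρ * P = L := div_mul_cancel₀ _ hP.ne'
  set m := ⌊t / P⌋ with hm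
  have hm0 : (0:ℝ) ≤ (m:ℝ) := by
    exact_mod_cast Int.floor_nonneg.2 (div_nonneg ht hP.le)
  have hmP : (m : ℝ) * P ≤ t := by
    have h := Int.floor_le (t / P)
    calc (m:ℝ) * P ≤ (t/P) * P := by nlinarith
    _ = t := div_mul_cancel₀ t hP.ne'
  have htP : t < ((m:ℝ) + 1) * P := by
    have h : t / P < (m:ℝ) + 1 := by exact_mod_cast Int.lt_floor_add_one (t / P)
    exact (div_lt_iff₀ hP).1 h
  set s := t - (m:ℝ) * P with hs
  have hs0 : 0 ≤ s := by simp [hs]; linarith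
  have hsP : s < P := by simp [hs]; nlinarith
  have hne := (Finset.univ_nonempty_iff (α := Fin n)).mpr ⟨⟨0, hn⟩⟩
  set σ := fun k : Fin n =>
      (∑ j : Fin n, if j ≤ k then l j else 0) - ρ * o k with hσ
  by_cases hc : ∃ j : Fin n, o j < s
  · obtain ⟨j0, hj0⟩ := hc
    set S := Finset.univ.filter (fun j : Fin n => o j < s) with hSdef
    have hS : S.Nonempty := ⟨j0, by simp [hSdef, hj0]⟩
    set k := S.max' hS with hk
    have hok : o k < s := by
      have := S.max'_mem hS
      simpa [hSdef] using this
    have hbig : ∀ j, ¬ j ≤ k → s ≤ o j := by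
      intro j hj
      by_contra h
      push_neg at h
      exact hj (S.le_max' j (by simp [hSdef, h]))
    have hpt : ∀ j : Fin n,
        l j * (⌈(t - o j)/P⌉ : ℝ) ≤ l j * ((m:ℝ) + if j ≤ k then 1 else 0) := by
      intro j
      apply mul_le_mul_of_nonneg_left _ (hl j)
      by_cases hjk : j ≤ k
      · simp only [if_pos hjk]
        have h1 : ⌈(t - o j)/P⌉ ≤ m + 1 := by
          apply Int.ceil_le.2
          push_cast
          rw [div_le_iff₀ hP]
          have := hoNN j
          nlinarith
        calc ((⌈(t - o j)/P⌉ : ℤ) : ℝ) ≤ ((m + 1 : ℤ) : ℝ) := by exact_mod_cast h1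
        _ = (m:ℝ) + 1 := by push_cast; ring
      · simp only [if_neg hjk, add_zero]
        have hsoj : s ≤ o j := hbig j hjk
        have h1 : ⌈(t - o j)/P⌉ ≤ m := by
          apply Int.ceil_le.2
          rw [div_le_iff₀ hP]
          nlinarith
        exact_mod_cast h1
    calc (∑ j : Fin n, l j * (⌈(t - o j)/P⌉ : ℝ))
        ≤ ∑ j : Fin n, l j * ((m:ℝ) + if j ≤ k then 1 else 0) :=
          Finset.sum_le_sum fun j _ => hpt j
      _ = (m:ℝ) * L + (∑ j : Fin n, if j ≤ k then l j else 0) := by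
          rw [hLdef, Finset.mul_sum, ← Finset.sum_add_distrib]
          refine Finset.sum_congr rfl fun j _ => ?_
          by_cases hjk : j ≤ k <;> simp [hjk] <;> ring
      _ ≤ ρ * t + σ k := by
          have h1 : 0 ≤ ρ * (s - o k) := mul_nonneg hρ (by linarith)
          simp only [hσ]
          nlinarith
      _ ≤ ρ * t + Finset.univ.sup' hne σ :=
          add_le_add_right (Finset.le_sup' σ (Finset.mem_univ k)) _
  · push_neg at hc
    have hpt : ∀ j : Fin n, l j * (⌈(t - o j)/P⌉ : ℝ) ≤ l j * (m:ℝ) := by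
      intro j
      apply mul_le_mul_of_nonneg_left _ (hl j)
      have h1 : ⌈(t - o j)/P⌉ ≤ m := by
        apply Int.ceil_le.2
        rw [div_le_iff₀ hP]
        have := hc j
        nlinarith
      exact_mod_cast h1
    set klast : Fin n := ⟨n - 1, by omega⟩ with hkl
    have hall : ∀ j : Fin n, j ≤ klast := by
      intro j
      rw [Fin.le_def]
      have := j.isLt
      simp [hkl]
      omega
    have hσk : 0 ≤ σ klast := by
      have h1 : (∑ j : Fin n, if j ≤ klast then l j else 0) = L := by
        rw [hLdef]
        exact Finset.sum_congr rfl fun j _ => if_pos (hall j)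
      have h2 : ρ * o klast ≤ ρ * P := mul_le_mul_of_nonneg_left (hoP klast) hρ
      simp only [hσ, h1]
      linarith
    calc (∑ j : Fin n, l j * (⌈(t - o j)/P⌉ : ℝ))
        ≤ ∑ j : Fin n, l j * (m:ℝ) := Finset.sum_le_sum fun j _ => hpt j
      _ = (m:ℝ) * L := by rw [hLdef, Finset.mul_sum]; exact Finset.sum_congr rfl fun j _ => mul_comm _ _
      _ ≤ ρ * t + σ klast := by nlinarith
      _ ≤ ρ * t + Finset.univ.sup' hne σ :=
          add_le_add_right (Finset.le_sup' σ (Finset.mem_univ klast)) _
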